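/- (Procedure to write new Clifford systems from old.) Let (P_0, P_1, …, P_m) be a Clifford system on a finite-dimensional real inner product space V. Define linear endomorphisms of V × V (with the product inner product) by: Q_0(x, y) = (y, x); Q_{m+1}(x, y) = (x, −y); and, for 1 ≤ α ≤ m, Q_α(x, y) = (−(P_0 ∘ P_α) y, (P_0 ∘ P_α) x). Then (Q_0, Q_1, …, Q_m, Q_{m+1}) is a Clifford system of m+2 elements on V × V: each Q_α is self-adjoint, Q_α ∘ Q_α = Id for every α, and Q_α ∘ Q_β = −Q_β ∘ Q_α whenever α ≠ β. -/

import Mathlib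

open scoped RealInnerProductSpace

/-- (Procedure to write new Clifford systems from old.)
Given a Clifford system `(P 0, …, P m)` on a finite-dimensional real inner product space `V`,
the endomorphisms of `V × V` (with the product, i.e. `L²`, inner product) given by
`Q 0 (x, y) = (y, x)`, `Q (m+1) (x, y) = (x, -y)` and, for `1 ≤ α ≤ m`,
`Q α (x, y) = (-(P 0 ∘ P α) y, (P 0 ∘ P α) x)`, form a Clifford system of `m + 2`
elements on `V × V`. -/
theorem cliffordSystem_doubling
    {V : Type*} [NormedAddCommGroup V] [InnerProductSpace ℝ V] [FiniteDimensional ℝ V]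
    {m : ℕ} (P : Fin (m + 1) → V →ₗ[ℝ] V)
    (hsa : ∀ α, ∀ x y : V, ⟪P α x, y⟫ = ⟪x, P α y⟫)
    (hsq : ∀ α, P α ∘ₗ P α = LinearMap.id)
    (hanti : ∀ α β, α ≠ β → P α ∘ₗ P β = -(P β ∘ₗ P α))
    (Q : Fin (m + 2) → (WithLp 2 (V × V) →ₗ[ℝ] WithLp 2 (V × V)))
    (hQ0 : ∀ x y : V,
      Q 0 ((WithLp.equiv 2 (V × V)).symm (x, y)) = (WithLp.equiv 2 (V × V)).symm (y, x))
    (hQlast : ∀ x y : V,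
      Q (Fin.last (m + 1)) ((WithLp.equiv 2 (V × V)).symm (x, y)) =
        (WithLp.equiv 2 (V × V)).symm (x, -y))
    (hQmid : ∀ (α : Fin (m + 2)) (_ : α ≠ 0) (hl : α ≠ Fin.last (m + 1)), ∀ x y : V,
      Q α ((WithLp.equiv 2 (V × V)).symm (x, y)) =
        (WithLp.equiv 2 (V × V)).symm
          (-(P 0 (P (α.castPred hl) y)), P 0 (P (α.castPred hl) x))) :
    (∀ α, ∀ u w : WithLp 2 (V × V), ⟪Q α u, w⟫ = ⟪u, Q α w⟫) ∧
    (∀ α, Q α ∘ₗ Q α = LinearMap.id) ∧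
    (∀ α β, α ≠ β → Q α ∘ₗ Q β = -(Q β ∘ₗ Q α)) := by
  set e := (WithLp.equiv 2 (V × V)) with he
  have hneg : ∀ a b : V, -(e.symm (a, b)) = e.symm (-a, -b) := fun a b => rfl
  -- pointwise algebra
  have hsq' : ∀ γ (x : V), P γ (P γ x) = x := fun γ x => LinearMap.ext_iff.mp (hsq γ) x
  have hanti' : ∀ γ δ, γ ≠ δ → ∀ x : V, P γ (P δ x) = -(P δ (P γ x)) := by
    intro γ δ h x
    simpa using LinearMap.ext_iff.mp (hanti γ δ h) x
  have hAA : ∀ γ, γ ≠ 0 → ∀ x : V, P 0 (P γ (P 0 (P γ x))) = -x := by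
    intro γ h x
    rw [hanti' γ 0 h (P γ x), map_neg, hsq' γ x, hsq' 0 x]
  have hAB : ∀ γ δ, γ ≠ 0 → ∀ x : V, P 0 (P γ (P 0 (P δ x))) = -(P γ (P δ x)) := by
    intro γ δ h x
    rw [hanti' γ 0 h (P δ x), map_neg, hsq' 0 (P γ (P δ x))]
  have hskew : ∀ γ, γ ≠ 0 → ∀ x y : V, ⟪P 0 (P γ x), y⟫ = -⟪x, P 0 (P γ y)⟫ := by
    intro γ h x y
    rw [hsa 0, hsa γ, hanti' γ 0 h y, inner_neg_right]
  -- pair representation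
  have pair : ∀ u : WithLp 2 (V × V), ∃ x y : V, u = e.symm (x, y) := by
    intro u; exact ⟨(e u).1, (e u).2, rfl⟩
  have comp_ext : ∀ (f g : WithLp 2 (V × V) →ₗ[ℝ] WithLp 2 (V × V)),
      (∀ x y : V, f (e.symm (x, y)) = g (e.symm (x, y))) → f = g := by
    intro f g h
    ext u
    obtain ⟨x, y, rfl⟩ := pair u
    exact h x y
  -- castPred facts
  have hcp : ∀ (α : Fin (m + 2)) (h0 : α ≠ 0) (hl : α ≠ Fin.last (m + 1)),
      α.castPred hl ≠ 0 := by
    intro α h0 hl h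
    apply h0
    have := congrArg Fin.castSucc h
    rwa [Fin.castSucc_castPred, Fin.castSucc_zero] at this
  refine ⟨?_, ?_, ?_⟩
  · -- self-adjoint
    intro α u w
    obtain ⟨x, y, rfl⟩ := pair u
    obtain ⟨x', y', rfl⟩ := pair w
    rcases eq_or_ne α 0 with rfl | h0
    · rw [hQ0, hQ0]
      simp only [he, WithLp.prod_inner_apply, WithLp.equiv_symm_apply, WithLp.ofLp_toLp]
      ring
    rcases eq_or_ne α (Fin.last (m + 1)) with rfl | hl
    · rw [hQlast, hQlast]
      simp [he, WithLp.prod_inner_apply, WithLp.equiv_symm_apply, WithLp.ofLp_toLp,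
        inner_neg_left, inner_neg_right]
    · rw [hQmid α h0 hl, hQmid α h0 hl]
      simp only [he, WithLp.prod_inner_apply, WithLp.equiv_symm_apply, WithLp.ofLp_toLp,
        inner_neg_left, inner_neg_right]
      rw [hskew _ (hcp α h0 hl) y x', hskew _ (hcp α h0 hl) x y']
      ring
  · -- squares
    intro α
    apply comp_ext
    intro x y
    simp only [LinearMap.comp_apply, LinearMap.id_apply]
    rcases eq_or_ne α 0 with rfl | h0
    · rw [hQ0, hQ0]
    rcases eq_or_ne α (Fin.last (m + 1)) with rfl | hl
    · rw [hQlast, hQlast, neg_neg]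
    · rw [hQmid α h0 hl, hQmid α h0 hl]
      apply congrArg
      refine Prod.ext ?_ ?_
      · show -(P 0 (P _ (P 0 (P _ x)))) = x
        rw [hAA _ (hcp α h0 hl), neg_neg]
      · show P 0 (P _ (-(P 0 (P _ y)))) = y
        rw [map_neg, map_neg, hAA _ (hcp α h0 hl), neg_neg]
  · -- anticommutation
    have flip : ∀ α β, Q α ∘ₗ Q β = -(Q β ∘ₗ Q α) → Q β ∘ₗ Q α = -(Q α ∘ₗ Q β) := by
      intro α β h; rw [h, neg_neg]
    have c0l : Q 0 ∘ₗ Q (Fin.last (m + 1)) = -(Q (Fin.last (m + 1)) ∘ₗ Q 0) := by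
      apply comp_ext
      intro x y
      simp only [LinearMap.comp_apply, LinearMap.neg_apply]
      rw [hQlast, hQ0, hQ0, hQlast, hneg]
      apply congrArg
      exact Prod.ext rfl (neg_neg x).symm
    have c0m : ∀ (β : Fin (m + 2)) (h0 : β ≠ 0) (hl : β ≠ Fin.last (m + 1)),
        Q 0 ∘ₗ Q β = -(Q β ∘ₗ Q 0) := by
      intro β h0 hl
      apply comp_ext
      intro x y
      simp only [LinearMap.comp_apply, LinearMap.neg_apply]
      rw [hQmid β h0 hl, hQ0, hQ0, hQmid β h0 hl, hneg]
      apply congrArg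
      exact Prod.ext (neg_neg _).symm rfl
    have clm : ∀ (β : Fin (m + 2)) (h0 : β ≠ 0) (hl : β ≠ Fin.last (m + 1)),
        Q (Fin.last (m + 1)) ∘ₗ Q β = -(Q β ∘ₗ Q (Fin.last (m + 1))) := by
      intro β h0 hl
      apply comp_ext
      intro x y
      simp only [LinearMap.comp_apply, LinearMap.neg_apply]
      rw [hQmid β h0 hl, hQlast, hQlast, hQmid β h0 hl, hneg]
      apply congrArg
      refine Prod.ext ?_ rfl
      show -(P 0 (P _ y)) = -(-(P 0 (P _ (-y))))
      rw [map_neg, map_neg, neg_neg]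
    intro α β hne
    rcases eq_or_ne α 0 with rfl | ha0
    · rcases eq_or_ne β (Fin.last (m + 1)) with rfl | hbl
      · exact c0l
      · exact c0m β (Ne.symm hne) hbl
    rcases eq_or_ne α (Fin.last (m + 1)) with rfl | hal
    · rcases eq_or_ne β 0 with rfl | hb0
      · exact flip _ _ c0l
      · exact clm β hb0 (Ne.symm hne)
    rcases eq_or_ne β 0 with rfl | hb0
    · exact flip _ _ (c0m α ha0 hal)
    rcases eq_or_ne β (Fin.last (m + 1)) with rfl | hbl
    · exact flip _ _ (clm α ha0 hal)
    · -- both mid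
      have hγδ : α.castPred hal ≠ β.castPred hbl := by
        intro h
        apply hne
        have := congrArg Fin.castSucc h
        rwa [Fin.castSucc_castPred, Fin.castSucc_castPred] at this
      apply comp_ext
      intro x y
      simp only [LinearMap.comp_apply, LinearMap.neg_apply]
      rw [hQmid β hb0 hbl, hQmid α ha0 hal, hQmid α ha0 hal, hQmid β hb0 hbl, hneg]
      set γ := α.castPred hal
      set δ := β.castPred hbl
      apply congrArg
      refine Prod.ext ?_ ?_
      · show -(P 0 (P γ (P 0 (P δ x)))) = -(-(P 0 (P δ (P 0 (P γ x)))))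
        simp only [hAB γ δ (hcp α ha0 hal), hAB δ γ (hcp β hb0 hbl), neg_neg,
          hanti' γ δ hγδ]
      · show P 0 (P γ (-(P 0 (P δ y)))) = -(P 0 (P δ (-(P 0 (P γ y)))))
        simp only [map_neg, hAB γ δ (hcp α ha0 hal), hAB δ γ (hcp β hb0 hbl), neg_neg,
          hanti' γ δ hγδ]
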